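/- Let R be a commutative unital ring, let r, s, n be natural numbers, and let a_1, ..., a_s ∈ R. If M is an R-module with M ≅ R^r ⊕ ⊕_{i=1}^s R/Ra_i, then the n-th symmetric power of M decomposes as S^n M ≅ R^{C(r+n−1,n)} ⊕ ⊕_{k=1}^n ⊕_{1 ≤ i_1 ≤ ... ≤ i_k ≤ s} ( R/⟨a_{i_1}, ..., a_{i_k}⟩ )^{C(r+n−k−1, n−k)}, where the inner direct sum is over all weakly increasing k-tuples (i_1, ..., i_k) with entries in {1,...,s}, ⟨a_{i_1}, ..., a_{i_k}⟩ denotes the ideal generated by a_{i_1}, ..., a_{i_k}, and C(·,·) denotes binomial coefficients. -/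

import Mathlib

open TensorProduct PiTensorProduct

/-- The submodule of permutation relations in the `n`-th tensor power. -/
abbrev SymRel (R : Type*) [CommRing R] (M : Type*) [AddCommGroup M] [Module R M] (n : ℕ) :
    Submodule R (TensorPower R n M) :=
  Submodule.span R {x | ∃ (m : Fin n → M) (π : Equiv.Perm (Fin n)),
    x = tprod R (fun i => m (π i)) - tprod R m}

/-- The `n`-th symmetric power `S^n M = T^n M / ⟨m_{π1}⊗⋯⊗m_{πn} − m_1⊗⋯⊗m_n⟩`. -/
abbrev SymPow (R : Type*) [CommRing R] (M : Type*) [AddCommGroup M] [Module R M] (n : ℕ) :=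
  TensorPower R n M ⧸ SymRel R M n

namespace SPD

variable {R : Type*} [CommRing R] {M N : Type*} [AddCommGroup M] [Module R M]
  [AddCommGroup N] [Module R N] {n : ℕ}

lemma symRel_map_le_aux (F : TensorPower R n M →ₗ[R] TensorPower R n N) (g : M → N)
    (hF : ∀ mm : Fin n → M, F (tprod R mm) = tprod R (g ∘ mm)) :
    (SymRel R M n).map F ≤ SymRel R N n := by
  rw [Submodule.map_span, Submodule.span_le]
  rintro x ⟨y, ⟨mm, π, rfl⟩, rfl⟩
  rw [map_sub, hF, hF]
  exact Submodule.subset_span ⟨g ∘ mm, π, rfl⟩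

lemma symRel_map_eq (e : M ≃ₗ[R] N) :
    (SymRel R M n).map (PiTensorProduct.congr (fun _ : Fin n => e)).toLinearMap
      = SymRel R N n := by
  refine le_antisymm (symRel_map_le_aux _ e fun mm => congr_tprod _ mm) ?_
  have h2 : (SymRel R N n).map (PiTensorProduct.congr (fun _ : Fin n => e)).symm.toLinearMap
      ≤ SymRel R M n := symRel_map_le_aux _ e.symm fun mm => congr_symm_tprod _ mm
  have h3 := Submodule.map_mono (f := (PiTensorProduct.congr (fun _ : Fin n => e)).toLinearMap) h2
  rw [← Submodule.map_comp] at h3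
  simpa using h3

/-- functoriality of `SymPow` under linear equivalences -/
noncomputable def sympowCongr (e : M ≃ₗ[R] N) : SymPow R M n ≃ₗ[R] SymPow R N n :=
  Submodule.Quotient.equiv _ _ (PiTensorProduct.congr fun _ => e) (symRel_map_eq e)



variable {R : Type*} [CommRing R] {r s n : ℕ}

/-- The standard module `R^r × ∏ R/(a i)`. -/
abbrev PMod (R : Type*) [CommRing R] (r s : ℕ) (a : Fin s → R) :=
  (Fin r → R) × (Π i : Fin s, R ⧸ Ideal.span {a i})

variable (a : Fin s → R)

/-- generators of `PMod` -/
def gen : Fin r ⊕ Fin s → PMod R r s a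
  | .inl t => (Pi.single t 1, 0)
  | .inr i => (0, Pi.single i (Ideal.Quotient.mk _ 1))

open Classical in
/-- coefficient functionals with values in `R ⧸ I` -/
noncomputable def lc (I : Ideal R) : Fin r ⊕ Fin s → (PMod R r s a →ₗ[R] R ⧸ I)
  | .inl t => I.mkQ ∘ₗ (LinearMap.proj t) ∘ₗ (LinearMap.fst R _ _)
  | .inr i => (if h : a i ∈ I then
      Submodule.mapQ (Ideal.span {a i}) I LinearMap.id
        (by simpa [Ideal.span_le] using h) else 0) ∘ₗ (LinearMap.proj i) ∘ₗ (LinearMap.snd R _ _)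

lemma lc_gen_diag {I : Ideal R} (c : Fin r ⊕ Fin s) (h : ∀ i, c = .inr i → a i ∈ I) :
    lc a I c (gen a c) = 1 := by
  cases c with
  | inl t => simp [lc, gen]
  | inr i =>
    have hi := h i rfl
    simp only [lc, gen, dif_pos hi, LinearMap.comp_apply, LinearMap.snd_apply,
      LinearMap.proj_apply, Pi.single_eq_same]
    rfl

lemma lc_gen_ne {I : Ideal R} {c c' : Fin r ⊕ Fin s} (h : c' ≠ c) :
    lc a I c (gen a c') = 0 := by
  cases c with
  | inl t =>
    cases c' with
    | inl t' =>
      have ht : t' ≠ t := fun e => h (by rw [e])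
      simp [lc, gen, Pi.single_apply, Ne.symm ht]
    | inr i => simp [lc, gen]
  | inr i =>
    cases c' with
    | inl t => simp [lc, gen]
    | inr i' =>
      have hi : i' ≠ i := fun e => h (by rw [e])
      rcases Classical.em (a i ∈ I) with hm | hm
      · simp [lc, gen, dif_pos hm, Pi.single_apply, Ne.symm hi]
      · simp [lc, gen, dif_neg hm]

lemma smul_gen_inr (i : Fin s) : a i • (gen a (Sum.inr i) : PMod R r s a) = 0 := by
  have h0 : a i • (Ideal.Quotient.mk (Ideal.span {a i}) (1:R)) = 0 := by
    rw [Algebra.smul_def, Ideal.Quotient.algebraMap_eq, ← _root_.map_mul, mul_one,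
      Ideal.Quotient.eq_zero_iff_mem]
    exact Ideal.mem_span_singleton_self _
  refine Prod.ext (by simp [gen]) ?_
  show a i • (gen a (Sum.inr i) : PMod R r s a).2 = 0
  funext i'
  simp only [gen]
  simp only [Pi.smul_apply, Pi.zero_apply]
  rcases eq_or_ne i' i with rfl | hne
  · rw [Pi.single_eq_same]; exact h0
  · rw [Pi.single_eq_of_ne hne, smul_zero]

/-- the product-of-coefficients multilinear map attached to a word `w` -/
noncomputable def Phi (I : Ideal R) (w : Fin n → Fin r ⊕ Fin s) :
    MultilinearMap R (fun _ : Fin n => PMod R r s a) (R ⧸ I) :=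
  (MultilinearMap.mkPiAlgebra R (Fin n) (R ⧸ I)).compLinearMap (fun j => lc a I (w j))

lemma Phi_apply (I : Ideal R) (w : Fin n → Fin r ⊕ Fin s) (m : Fin n → PMod R r s a) :
    Phi a I w m = ∏ j, lc a I (w j) (m j) := by
  simp [Phi]

lemma Phi_comp_perm (I : Ideal R) (w : Fin n → Fin r ⊕ Fin s) (π : Equiv.Perm (Fin n))
    (m : Fin n → PMod R r s a) : Phi a I (w ∘ π) (fun j => m (π j)) = Phi a I w m := by
  rw [Phi_apply, Phi_apply]
  exact Equiv.prod_comp π (fun j => lc a I (w j) (m j))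

lemma Phi_gen (I : Ideal R) (w w' : Fin n → Fin r ⊕ Fin s)
    (h : ∀ j i, w j = .inr i → a i ∈ I) :
    Phi a I w (gen a ∘ w') = if w' = w then 1 else 0 := by
  rw [Phi_apply]
  split_ifs with hw
  · subst hw
    rw [Finset.prod_eq_one]
    intro j _
    exact lc_gen_diag a (w' j) (h j)
  · obtain ⟨j, hj⟩ : ∃ j, w' j ≠ w j := by
      by_contra hc
      push_neg at hc
      exact hw (funext hc)
    exact Finset.prod_eq_zero (Finset.mem_univ j) (lc_gen_ne a hj)

/-- multiset of values of a tuple (copied from p1) -/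
def msOf {α : Type*} {m : ℕ} (f : Fin m → α) : Multiset α := (List.ofFn f : Multiset α)

lemma mem_msOf {α : Type*} {m : ℕ} {f : Fin m → α} {x : α} :
    x ∈ msOf f ↔ ∃ j, f j = x := by
  simp [msOf, List.mem_ofFn, Set.mem_range]

/-- the component multilinear map attached to a canonical word `w0`:
sum of `Phi` over all words with the same multiset -/
noncomputable def Comp (I : Ideal R) (w0 : Fin n → Fin r ⊕ Fin s) :
    MultilinearMap R (fun _ : Fin n => PMod R r s a) (R ⧸ I) :=
  ∑ w ∈ Finset.univ.filter (fun w : Fin n → Fin r ⊕ Fin s => msOf w = msOf w0), Phi a I w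

lemma msOf_comp_perm' {α : Type*} {m : ℕ} (f : Fin m → α) (π : Equiv.Perm (Fin m)) :
    msOf (f ∘ π) = msOf f := by
  classical
  have h1 : ∀ g : Fin m → α, msOf g = Multiset.map g Finset.univ.val := by
    intro g
    simp [msOf, List.ofFn_eq_map, Fin.univ_def, Finset.val]
  have hperm : Multiset.map π Finset.univ.val = (Finset.univ.val : Multiset (Fin m)) := by
    symm
    conv_lhs => rw [← Finset.map_univ_equiv π.symm]
    simp [Finset.map_val, Function.comp_def]
  rw [h1, h1]
  conv_rhs => rw [← hperm]
  rw [Multiset.map_map]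

lemma Comp_perm (I : Ideal R) (w0 : Fin n → Fin r ⊕ Fin s) (π : Equiv.Perm (Fin n))
    (m : Fin n → PMod R r s a) :
    Comp a I w0 (fun j => m (π j)) = Comp a I w0 m := by
  classical
  simp only [Comp, MultilinearMap.sum_apply]
  refine Finset.sum_bij' (fun w _ => w ∘ ⇑π.symm) (fun w _ => w ∘ ⇑π) ?_ ?_ ?_ ?_ ?_
  · intro w hw
    simp only [Finset.mem_filter, Finset.mem_univ, true_and] at hw ⊢
    rw [msOf_comp_perm' w π.symm, hw]
  · intro w hw
    simp only [Finset.mem_filter, Finset.mem_univ, true_and] at hw ⊢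
    rw [msOf_comp_perm' w π, hw]
  · intro w _
    funext j; simp
  · intro w _
    funext j; simp
  · intro w _
    have h2 := Phi_comp_perm a I (w ∘ ⇑π.symm) π m
    have h3 : (w ∘ ⇑π.symm) ∘ ⇑π = w := by funext j; simp
    rw [h3] at h2
    exact h2

lemma Comp_gen (I : Ideal R) (w0 w' : Fin n → Fin r ⊕ Fin s)
    (h : ∀ j i, w0 j = .inr i → a i ∈ I) :
    Comp a I w0 (gen a ∘ w') = if msOf w' = msOf w0 then 1 else 0 := by
  classical
  simp only [Comp, MultilinearMap.sum_apply]
  have hterm : ∀ w ∈ Finset.univ.filter (fun w : Fin n → Fin r ⊕ Fin s => msOf w = msOf w0),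
      Phi a I w (gen a ∘ w') = if w' = w then 1 else 0 := by
    intro w hw
    simp only [Finset.mem_filter, Finset.mem_univ, true_and] at hw
    refine Phi_gen a I w w' (fun j i hji => ?_)
    have : Sum.inr i ∈ msOf w0 := by rw [← hw]; exact mem_msOf.2 ⟨j, hji⟩
    obtain ⟨j', hj'⟩ := mem_msOf.1 this
    exact h j' i hj'
  rw [Finset.sum_congr rfl hterm]
  rw [Finset.sum_ite_eq (Finset.univ.filter (fun w : Fin n → Fin r ⊕ Fin s => msOf w = msOf w0))
    w' (fun _ => (1 : R ⧸ I))]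
  simp




/-- merge of two sorted words -/
def merge {m k : ℕ} (h : m + k = n) (u : Fin m → Fin r) (v : Fin k → Fin s) :
    Fin n → Fin r ⊕ Fin s :=
  fun j => Fin.append (Sum.inl ∘ u) (Sum.inr ∘ v) (Fin.cast h.symm j)

lemma msOf_cast {α : Type*} {m m' : ℕ} (h : m' = m) (f : Fin m → α) :
    msOf (f ∘ Fin.cast h) = msOf f := by subst h; rfl

lemma msOf_comp {α β : Type*} {m : ℕ} (g : α → β) (f : Fin m → α) :
    msOf (g ∘ f) = (msOf f).map g := by
  simp only [msOf, ← List.map_ofFn]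
  rfl

lemma merge_cast {m k m' k' : ℕ} (h : m + k = n) (h' : m' + k' = n)
    (hm : m' = m) (hk : k' = k) (u : Fin m → Fin r) (v : Fin k → Fin s) :
    merge h' (u ∘ Fin.cast hm) (v ∘ Fin.cast hk) = merge h u v := by
  subst hm; subst hk; rfl

lemma msOf_merge {m k : ℕ} (h : m + k = n) (u : Fin m → Fin r) (v : Fin k → Fin s) :
    msOf (merge h u v) = (msOf u).map (Sum.inl : Fin r → Fin r ⊕ Fin s)
      + (msOf v).map (Sum.inr : Fin s → Fin r ⊕ Fin s) := by
  have h1 : merge h u v = Fin.append (Sum.inl ∘ u) (Sum.inr ∘ v) ∘ Fin.cast h.symm := rfl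
  rw [h1, msOf_cast]
  unfold msOf
  rw [List.ofFn_fin_append]
  exact congrArg₂ HAdd.hAdd (msOf_comp Sum.inl u) (msOf_comp Sum.inr v)

lemma card_msOf {α : Type*} {m : ℕ} (f : Fin m → α) : Multiset.card (msOf f) = m := by
  simp [msOf]

lemma filtL_inl (x : Multiset (Fin r)) :
    Multiset.filter (fun c : Fin r ⊕ Fin s => c.isLeft = true) (x.map Sum.inl) = x.map Sum.inl :=
  Multiset.filter_eq_self.2 (by simp)

lemma filtL_inr (y : Multiset (Fin s)) :
    Multiset.filter (fun c : Fin r ⊕ Fin s => c.isLeft = true) (y.map Sum.inr) = 0 :=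
  Multiset.filter_eq_nil.2 (by simp)

lemma filtR_inl (x : Multiset (Fin r)) :
    Multiset.filter (fun c : Fin r ⊕ Fin s => c.isRight = true) (x.map Sum.inl) = 0 :=
  Multiset.filter_eq_nil.2 (by simp)

lemma filtR_inr (y : Multiset (Fin s)) :
    Multiset.filter (fun c : Fin r ⊕ Fin s => c.isRight = true) (y.map Sum.inr) = y.map Sum.inr :=
  Multiset.filter_eq_self.2 (by simp)

/-- number of `inr`s in a multiset -/
def cntR (μ : Multiset (Fin r ⊕ Fin s)) : ℕ :=
  Multiset.card (Multiset.filter (fun c => c.isRight = true) μ)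

lemma cntR_merge {m k : ℕ} (h : m + k = n) (u : Fin m → Fin r) (v : Fin k → Fin s) :
    cntR (msOf (merge h u v)) = k := by
  rw [cntR, msOf_merge, Multiset.filter_add, filtR_inl, filtR_inr]
  simp [card_msOf]

lemma cntR_inl (u : Fin n → Fin r) : cntR (msOf ((Sum.inl ∘ u : Fin n → Fin r ⊕ Fin s))) = 0 := by
  rw [cntR, msOf_comp, filtR_inl]
  rfl

lemma monotone_unique' {α : Type*} [LinearOrder α] {m : ℕ} {f g : Fin m → α}
    (hf : Monotone f) (hg : Monotone g) (h : msOf f = msOf g) : f = g := by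
  apply List.ofFn_injective
  exact List.Perm.eq_of_sortedLE hf.sortedLE_ofFn hg.sortedLE_ofFn (Multiset.coe_eq_coe.1 h)

lemma merge_inj {m k : ℕ} (h : m + k = n) {u u' : Fin m → Fin r} {v v' : Fin k → Fin s}
    (hu : Monotone u) (hu' : Monotone u') (hv : Monotone v) (hv' : Monotone v')
    (he : msOf (merge h u v) = msOf (merge h u' v')) : u = u' ∧ v = v' := by
  rw [msOf_merge, msOf_merge] at he
  have hL : (msOf u).map (Sum.inl : Fin r → Fin r ⊕ Fin s)
      = (msOf u').map (Sum.inl : Fin r → Fin r ⊕ Fin s) := by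
    have := congrArg (Multiset.filter (fun c : Fin r ⊕ Fin s => c.isLeft = true)) he
    rwa [Multiset.filter_add, Multiset.filter_add, filtL_inl, filtL_inl,
      filtL_inr, filtL_inr, add_zero, add_zero] at this
  have hR : (msOf v).map (Sum.inr : Fin s → Fin r ⊕ Fin s)
      = (msOf v').map (Sum.inr : Fin s → Fin r ⊕ Fin s) := by
    have := congrArg (Multiset.filter (fun c : Fin r ⊕ Fin s => c.isRight = true)) he
    rwa [Multiset.filter_add, Multiset.filter_add, filtR_inr, filtR_inr,
      filtR_inl, filtR_inl, zero_add, zero_add] at this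
  constructor
  · exact monotone_unique' hu hu' (Multiset.map_injective Sum.inl_injective hL)
  · exact monotone_unique' hv hv' (Multiset.map_injective Sum.inr_injective hR)

lemma inl_inj {u u' : Fin n → Fin r} (hu : Monotone u) (hu' : Monotone u')
    (he : msOf ((Sum.inl ∘ u : Fin n → Fin r ⊕ Fin s)) =
      msOf ((Sum.inl ∘ u' : Fin n → Fin r ⊕ Fin s))) : u = u' := by
  rw [msOf_comp, msOf_comp] at he
  exact monotone_unique' hu hu' (Multiset.map_injective Sum.inl_injective he)

/-- a lower (downward-closed) decidable subset of `Fin n` is an initial segment -/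
lemma lower_filter {p : Fin n → Prop} [DecidablePred p]
    (hp : ∀ {i j : Fin n}, i ≤ j → p j → p i) (j : Fin n) :
    p j ↔ j.1 < (Finset.univ.filter p).card := by
  constructor
  · intro hj
    have hsub : Finset.Iic j ⊆ Finset.univ.filter p := by
      intro i hi
      simp only [Finset.mem_Iic] at hi
      simp only [Finset.mem_filter, Finset.mem_univ, true_and]
      exact hp hi hj
    have := Finset.card_le_card hsub
    rw [Fin.card_Iic] at this
    omega
  · intro hj
    by_contra hnp
    have hsub : Finset.univ.filter p ⊆ Finset.Iio j := by
      intro i hi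
      simp only [Finset.mem_filter, Finset.mem_univ, true_and] at hi
      simp only [Finset.mem_Iio]
      by_contra hij
      exact hnp (hp (le_of_not_gt hij) hi)
    have := Finset.card_le_card hsub
    rw [Fin.card_Iio] at this
    omega

lemma isLeft_iff_lt {c : Fin r ⊕ Fin s} :
    c.isLeft = true ↔ (finSumFinEquiv c).1 < r := by
  cases c with
  | inl t => simp [t.isLt]
  | inr i => simp

/-- every word is a permutation of a canonical (merged monotone) word -/
lemma exists_canonical_nat (w : Fin n → Fin r ⊕ Fin s) :
    ∃ (m k : ℕ) (h : m + k = n) (u : Fin m → Fin r) (v : Fin k → Fin s),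
      Monotone u ∧ Monotone v ∧ ∃ π : Equiv.Perm (Fin n), merge h u v = w ∘ π := by
  classical
  set π := Tuple.sort (fun j => finSumFinEquiv (w j)) with hπ
  set f : Fin n → Fin r ⊕ Fin s := w ∘ π with hf
  have hmono : Monotone (fun j => finSumFinEquiv (f j)) :=
    Tuple.monotone_sort (fun j => finSumFinEquiv (w j))
  set m := (Finset.univ.filter (fun j : Fin n => (f j).isLeft = true)).card with hm
  have hmn : m ≤ n := by
    have := Finset.card_filter_le (Finset.univ : Finset (Fin n))
      (fun j : Fin n => (f j).isLeft = true)
    simpa using this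
  have claimA : ∀ j : Fin n, (f j).isLeft = true ↔ j.1 < m := by
    refine lower_filter (fun {i j} hij hj => ?_)
    rw [isLeft_iff_lt] at hj ⊢
    exact lt_of_le_of_lt (hmono hij) hj
  have hgetl : ∀ j : Fin n, j.1 < m → ∃ t, f j = Sum.inl t := by
    intro j hj
    have := (claimA j).2 hj
    cases hc : f j with
    | inl t => exact ⟨t, rfl⟩
    | inr i => rw [hc] at this; simp at this
  have hgetr : ∀ j : Fin n, m ≤ j.1 → ∃ i, f j = Sum.inr i := by
    intro j hj
    have : ¬ ((f j).isLeft = true) := by rw [claimA]; omega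
    cases hc : f j with
    | inl t => rw [hc] at this; simp at this
    | inr i => exact ⟨i, rfl⟩
  have keyL : ∀ (i j : Fin n), i ≤ j → ∀ t t', f i = Sum.inl t → f j = Sum.inl t' →
      t ≤ t' := by
    intro i j hij t t' hti htj
    have h2 := hmono hij
    simp only [hti, htj, finSumFinEquiv_apply_left] at h2
    have h4 : t.1 ≤ t'.1 := Fin.le_def.1 h2
    exact Fin.le_def.2 h4
  have keyR : ∀ (i j : Fin n), i ≤ j → ∀ t t', f i = Sum.inr t → f j = Sum.inr t' →
      t ≤ t' := by
    intro i j hij t t' hti htj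
    have h2 := hmono hij
    simp only [hti, htj, finSumFinEquiv_apply_right] at h2
    have h4 : r + t.1 ≤ r + t'.1 := Fin.le_def.1 h2
    exact Fin.le_def.2 (by omega)
  have hadd : m + (n - m) = n := by omega
  refine ⟨m, n - m, hadd, ?_⟩
  have hmem : ∀ j : Fin m, (j.1 : ℕ) < n := fun j => lt_of_lt_of_le j.isLt hmn
  have hmem2 : ∀ j : Fin (n - m), m + j.1 < n := fun j => by have := j.isLt; omega
  set u : Fin m → Fin r := fun j => (hgetl ⟨j.1, hmem j⟩ j.isLt).choose with hu
  set v : Fin (n - m) → Fin s :=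
    fun j => (hgetr ⟨m + j.1, hmem2 j⟩ (Nat.le_add_right m j.1)).choose with hv
  refine ⟨u, v, ?_, ?_, π, ?_⟩
  · intro i j hij
    exact keyL ⟨i.1, hmem i⟩ ⟨j.1, hmem j⟩ (Fin.mk_le_mk.2 hij) _ _
      (hgetl ⟨i.1, hmem i⟩ i.isLt).choose_spec
      (hgetl ⟨j.1, hmem j⟩ j.isLt).choose_spec
  · intro i j hij
    refine keyR ⟨m + i.1, hmem2 i⟩ ⟨m + j.1, hmem2 j⟩
      (Fin.mk_le_mk.2 (by have : i.1 ≤ j.1 := hij; omega)) _ _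
      (hgetr _ (Nat.le_add_right m i.1)).choose_spec
      (hgetr _ (Nat.le_add_right m j.1)).choose_spec
  · funext j
    show Fin.append (Sum.inl ∘ u) (Sum.inr ∘ v) (Fin.cast hadd.symm j) = f j
    rcases lt_or_ge j.1 m with hjm | hjm
    · have hcast : Fin.cast hadd.symm j = Fin.castAdd (n - m) ⟨j.1, hjm⟩ := by
        apply Fin.ext; rfl
      rw [hcast, Fin.append_left]
      have hc := (hgetl ⟨(⟨j.1, hjm⟩ : Fin m).1, hmem ⟨j.1, hjm⟩⟩
        (⟨j.1, hjm⟩ : Fin m).isLt).choose_spec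
      have hidx : (⟨(⟨j.1, hjm⟩ : Fin m).1, hmem ⟨j.1, hjm⟩⟩ : Fin n) = j := by
        apply Fin.ext; rfl
      exact hc.symm.trans (congrArg f hidx)
    · have hjn : j.1 - m < n - m := by have := j.isLt; omega
      have hcast : Fin.cast hadd.symm j = Fin.natAdd m ⟨j.1 - m, hjn⟩ := by
        apply Fin.ext
        show j.1 = m + (j.1 - m)
        omega
      rw [hcast, Fin.append_right]
      have hc := (hgetr ⟨m + ((⟨j.1 - m, hjn⟩ : Fin (n - m))).1,
        hmem2 ⟨j.1 - m, hjn⟩⟩ (Nat.le_add_right m _)).choose_spec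
      have hidx : (⟨m + ((⟨j.1 - m, hjn⟩ : Fin (n - m))).1,
          hmem2 ⟨j.1 - m, hjn⟩⟩ : Fin n) = j := by
        apply Fin.ext
        show m + (j.1 - m) = j.1
        omega
      exact hc.symm.trans (congrArg f hidx)


/-- monotone tuples are equivalent to `Sym`. -/
noncomputable def monoEquivSym {α : Type*} [LinearOrder α] {m : ℕ} :
    {f : Fin m → α // Monotone f} ≃ Sym α m := by
  apply Equiv.ofBijective (fun f => Sym.mk (msOf f.1) (by simp [msOf]))
  constructor
  · rintro ⟨f, hf⟩ ⟨g, hg⟩ h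
    exact Subtype.ext (monotone_unique' hf hg (congrArg Subtype.val h))
  · rintro ⟨σ, hσ⟩
    classical
    set l := Multiset.sort σ (· ≤ ·) with hl
    have hlen : l.length = m := by simp [hl, hσ]
    refine ⟨⟨fun j => l.get (Fin.cast hlen.symm j), ?_⟩, ?_⟩
    · intro i j hij
      exact List.Pairwise.rel_get_of_le (Multiset.pairwise_sort σ _) (by simpa using hij)
    · apply Subtype.ext
      simp only [msOf]
      have : List.ofFn (fun j => l.get (Fin.cast hlen.symm j)) = l := by
        apply List.ext_get (by simp [hlen])
        intro i h1 h2
        simp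
      rw [this]
      simp [hl]

lemma card_mono {m : ℕ} (r : ℕ) :
    Nat.card {f : Fin m → Fin r // Monotone f} = (r + m - 1).choose m := by
  rw [Nat.card_congr (monoEquivSym (α := Fin r))]
  simp [Nat.card_eq_fintype_card, Sym.card_sym_eq_choose]


section Main
variable {R : Type*} [CommRing R] {r s n : ℕ} (a : Fin s → R)

/-- arithmetic fact for torsion indices -/
lemma hkk (k : Fin n) : (n - (k.1+1)) + (k.1+1) = n := Nat.sub_add_cancel k.isLt

/-- the ideal attached to a monotone tuple `v` -/
abbrev Iv {k : Fin n} (v : {v : Fin (k.1 + 1) → Fin s // Monotone v}) : Ideal R :=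
  Ideal.span (Set.range fun j => a (v.1 j))

/-- canonical symmetrized tensor attached to a word -/
noncomputable def symtensor (w : Fin n → Fin r ⊕ Fin s) : SymPow R (PMod R r s a) n :=
  Submodule.Quotient.mk (tprod R (gen a ∘ w))

lemma symtensor_perm (w : Fin n → Fin r ⊕ Fin s) (π : Equiv.Perm (Fin n)) :
    symtensor a (w ∘ π) = symtensor a w := by
  rw [symtensor, symtensor, Submodule.Quotient.eq]
  exact Submodule.subset_span ⟨gen a ∘ w, π, rfl⟩

lemma merge_natAdd {m k' : ℕ} (h : m + k' = n) (u : Fin m → Fin r) (v : Fin k' → Fin s)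
    (j : Fin k') : merge h u v (Fin.cast h (Fin.natAdd m j)) = Sum.inr (v j) := by
  show Fin.append (Sum.inl ∘ u) (Sum.inr ∘ v) (Fin.cast h.symm (Fin.cast h (Fin.natAdd m j)))
    = _
  have : Fin.cast h.symm (Fin.cast h (Fin.natAdd m j)) = Fin.natAdd m j := by
    apply Fin.ext; rfl
  rw [this, Fin.append_right]
  rfl

lemma symtensor_smul_zero (w : Fin n → Fin r ⊕ Fin s) (j : Fin n) (i : Fin s)
    (hw : w j = Sum.inr i) : a i • symtensor a w = 0 := by
  rw [symtensor, ← Submodule.Quotient.mk_smul]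
  have h1 : a i • tprod R (gen a ∘ w) =
      tprod R (Function.update (gen a ∘ w) j (a i • gen a (Sum.inr i))) := by
    rw [MultilinearMap.map_update_smul]
    congr 1
    have : (gen a ∘ w) j = gen a (Sum.inr i) := by rw [Function.comp_apply, hw]
    rw [← this, Function.update_eq_self]
  rw [h1, smul_gen_inr, MultilinearMap.map_update_zero (PiTensorProduct.tprod R) _ j]
  rfl

lemma merge_mem_Iv {m k' : ℕ} (h : m + k' = n) (u : Fin m → Fin r) (v : Fin k' → Fin s)
    (I : Ideal R) (hI : ∀ j, a (v j) ∈ I) :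
    ∀ j i, merge h u v j = Sum.inr i → a i ∈ I := by
  intro j i hj
  have hmem : Sum.inr i ∈ msOf (merge h u v) := mem_msOf.2 ⟨j, hj⟩
  rw [msOf_merge] at hmem
  rcases Multiset.mem_add.1 hmem with hm | hm
  · obtain ⟨t, _, ht⟩ := Multiset.mem_map.1 hm
    exact absurd ht (by simp)
  · obtain ⟨t, htm, ht⟩ := Multiset.mem_map.1 hm
    obtain ⟨j', hj'⟩ := mem_msOf.1 htm
    have : i = t := by injection ht.symm
    subst this
    rw [← hj']
    exact hI j'

end Main

/-- the target module of the decomposition -/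
abbrev XMod (R : Type*) [CommRing R] (r s n : ℕ) (a : Fin s → R) :=
  (Fin ((r + n - 1).choose n) → R) ×
  Π (k : Fin n) (v : {v : Fin (k.1 + 1) → Fin s // Monotone v}),
    Fin ((r + (n - (k.1+1)) - 1).choose (n - (k.1+1))) → R ⧸ Iv a v

section Main2
variable {R : Type*} [CommRing R] {r s n : ℕ} (a : Fin s → R)
variable (eF : Fin ((r + n - 1).choose n) ≃ {u : Fin n → Fin r // Monotone u})
variable (eT : ∀ k : Fin n, Fin ((r + (n - (k.1+1)) - 1).choose (n - (k.1+1)))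
  ≃ {u : Fin (n - (k.1+1)) → Fin r // Monotone u})


/-- canonical word for a free index -/
def wF (q : Fin ((r + n - 1).choose n)) : Fin n → Fin r ⊕ Fin s := Sum.inl ∘ (eF q).1

/-- canonical word for a torsion index -/
def wT (k : Fin n) (v : {v : Fin (k.1 + 1) → Fin s // Monotone v})
    (q : Fin ((r + (n - (k.1+1)) - 1).choose (n - (k.1+1)))) : Fin n → Fin r ⊕ Fin s :=
  merge (hkk k) ((eT k) q).1 v.1

/-- the big multilinear map -/
noncomputable def PhiAll : MultilinearMap R (fun _ : Fin n => PMod R r s a) (XMod R r s n a) :=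
  (MultilinearMap.pi (fun q => (Submodule.quotEquivOfEqBot (⊥ : Ideal R)
      rfl).toLinearMap.compMultilinearMap (Comp a ⊥ (wF eF q)))).prod
    (MultilinearMap.pi (fun k => MultilinearMap.pi (fun v => MultilinearMap.pi
      (fun q => Comp a (Iv a v) (wT eT k v q)))))

lemma PhiAll_perm (m : Fin n → PMod R r s a) (π : Equiv.Perm (Fin n)) :
    PhiAll a eF eT (fun i => m (π i)) = PhiAll a eF eT m := by
  refine Prod.ext ?_ ?_
  · funext q
    show (Submodule.quotEquivOfEqBot (⊥ : Ideal R) rfl)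
        (Comp a ⊥ (wF eF q) (fun i => m (π i))) = _
    rw [Comp_perm]
    rfl
  · funext k v q
    show Comp a (Iv a v) (wT eT k v q) (fun i => m (π i)) = _
    rw [Comp_perm]
    rfl

/-- forward map -/
noncomputable def phi : SymPow R (PMod R r s a) n →ₗ[R] XMod R r s n a :=
  Submodule.liftQ _ (PiTensorProduct.lift (PhiAll a eF eT)) (by
    rw [Submodule.span_le]
    rintro x ⟨mm, π, rfl⟩
    simp only [SetLike.mem_coe, LinearMap.mem_ker, map_sub, PiTensorProduct.lift.tprod]
    rw [PhiAll_perm, sub_self])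

lemma phi_symtensor (w : Fin n → Fin r ⊕ Fin s) :
    phi a eF eT (symtensor a w) = PhiAll a eF eT (gen a ∘ w) := by
  rw [symtensor, phi, Submodule.liftQ_apply, PiTensorProduct.lift.tprod]

lemma phi_symtensor_fst (w : Fin n → Fin r ⊕ Fin s) (q : Fin ((r + n - 1).choose n)) :
    (phi a eF eT (symtensor a w)).1 q = if msOf w = msOf (wF eF q) then 1 else 0 := by
  rw [phi_symtensor]
  show (Submodule.quotEquivOfEqBot (⊥ : Ideal R) rfl)
      (Comp a ⊥ (wF eF q) (gen a ∘ w)) = _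
  rw [Comp_gen a ⊥ (wF eF q) w (fun j i hj => absurd hj (by simp [wF]))]
  split_ifs
  · exact Submodule.quotEquivOfEqBot_apply_mk (⊥ : Ideal R) rfl (1 : R)
  · exact map_zero _

lemma phi_symtensor_snd (w : Fin n → Fin r ⊕ Fin s) (k : Fin n)
    (v : {v : Fin (k.1 + 1) → Fin s // Monotone v})
    (q : Fin ((r + (n - (k.1+1)) - 1).choose (n - (k.1+1)))) :
    (phi a eF eT (symtensor a w)).2 k v q
      = if msOf w = msOf (wT eT k v q) then (1 : R ⧸ Iv a v) else 0 := by
  rw [phi_symtensor]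
  show Comp a (Iv a v) (wT eT k v q) (gen a ∘ w) = _
  refine Comp_gen a (Iv a v) (wT eT k v q) w ?_
  exact merge_mem_Iv a (hkk k) ((eT k) q).1 v.1 (Iv a v)
    (fun j => Ideal.subset_span ⟨j, rfl⟩)

end Main2

section Main3
variable {R : Type*} [CommRing R] {r s n : ℕ} (a : Fin s → R)
variable (eF : Fin ((r + n - 1).choose n) ≃ {u : Fin n → Fin r // Monotone u})
variable (eT : ∀ k : Fin n, Fin ((r + (n - (k.1+1)) - 1).choose (n - (k.1+1)))
  ≃ {u : Fin (n - (k.1+1)) → Fin r // Monotone u})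

/-- contribution of one torsion component -/
noncomputable def qLift (k : Fin n) (v : {v : Fin (k.1 + 1) → Fin s // Monotone v})
    (q : Fin ((r + (n - (k.1+1)) - 1).choose (n - (k.1+1)))) :
    (R ⧸ Iv a v) →ₗ[R] SymPow R (PMod R r s a) n :=
  Submodule.liftQ (Iv a v)
    (LinearMap.toSpanSingleton R _ (symtensor a (wT eT k v q)))
    (by
      refine Submodule.span_le.2 ?_
      rintro x ⟨j, rfl⟩
      simp only [SetLike.mem_coe, LinearMap.mem_ker, LinearMap.toSpanSingleton_apply]
      exact symtensor_smul_zero a _ (Fin.cast (hkk k) (Fin.natAdd _ j)) (v.1 j)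
        (merge_natAdd (hkk k) ((eT k) q).1 v.1 j))

lemma qLift_mk (k : Fin n) (v : {v : Fin (k.1 + 1) → Fin s // Monotone v})
    (q : Fin ((r + (n - (k.1+1)) - 1).choose (n - (k.1+1)))) (x : R) :
    qLift a eT k v q (Ideal.Quotient.mk _ x) = x • symtensor a (wT eT k v q) := by
  rw [qLift]
  exact Submodule.liftQ_apply _ _ x

/-- backward map -/
noncomputable def psi : XMod R r s n a →ₗ[R] SymPow R (PMod R r s a) n :=
  ((LinearMap.lsum R (fun _ : Fin ((r + n - 1).choose n) => R) R
      (fun q => LinearMap.toSpanSingleton R _ (symtensor a (wF eF q)))).comp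
    (LinearMap.fst R _ _)) +
  ((LinearMap.lsum R _ R (fun k : Fin n => LinearMap.lsum R _ R
      (fun v : {v : Fin (k.1 + 1) → Fin s // Monotone v} => LinearMap.lsum R _ R
        (fun q => qLift a eT k v q)))).comp
    (LinearMap.snd R _ _))

lemma psi_apply (x : Fin ((r + n - 1).choose n) → R)
    (y : Π (k : Fin n) (v : {v : Fin (k.1 + 1) → Fin s // Monotone v}),
      Fin ((r + (n - (k.1+1)) - 1).choose (n - (k.1+1))) → R ⧸ Iv a v) :
    psi a eF eT (x, y) = (∑ q, x q • symtensor a (wF eF q)) +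
      ∑ k, ∑ v, ∑ q, qLift a eT k v q (y k v q) := by
  rw [psi]
  simp only [LinearMap.add_apply, LinearMap.comp_apply, LinearMap.fst_apply,
    LinearMap.snd_apply]
  congr 1
  · rw [LinearMap.lsum_apply]
    simp [LinearMap.toSpanSingleton_apply]
  · rw [LinearMap.lsum_apply]
    simp only [LinearMap.coe_sum, Finset.sum_apply, LinearMap.comp_apply,
      LinearMap.proj_apply]
    refine Finset.sum_congr rfl (fun k _ => ?_)
    rw [LinearMap.lsum_apply]
    simp only [LinearMap.coe_sum, Finset.sum_apply, LinearMap.comp_apply,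
      LinearMap.proj_apply]
    refine Finset.sum_congr rfl (fun v _ => ?_)
    rw [LinearMap.lsum_apply]
    simp only [LinearMap.coe_sum, Finset.sum_apply, LinearMap.comp_apply,
      LinearMap.proj_apply]

lemma smul_mk_one (I : Ideal R) (x : R) :
    x • (Ideal.Quotient.mk I 1) = Ideal.Quotient.mk I x := by
  rw [Algebra.smul_def, Ideal.Quotient.algebraMap_eq, ← _root_.map_mul, mul_one]

/-- the symmetrized generator tensors span -/
lemma span_symtensor : Submodule.span R (Set.range (symtensor a (r := r) (n := n))) = ⊤ := by
  classical
  rw [eq_top_iff]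
  rintro x -
  obtain ⟨y, rfl⟩ := Submodule.Quotient.mk_surjective _ x
  induction y using PiTensorProduct.induction_on with
  | smul_tprod c m =>
    rw [Submodule.Quotient.mk_smul]
    refine Submodule.smul_mem _ c ?_
    -- expand each entry in terms of generators
    set coeff : Fin n → (Fin r ⊕ Fin s) → R := fun j => Sum.elim (fun t => (m j).1 t)
      (fun i => (Ideal.Quotient.mk_surjective ((m j).2 i)).choose) with hcoeff
    have hm : ∀ j, m j = ∑ c : Fin r ⊕ Fin s, coeff j c • gen a c := by
      intro j
      rw [Fintype.sum_sum_type]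
      refine Prod.ext ?_ ?_
      · rw [Prod.fst_add, Prod.fst_sum, Prod.fst_sum]
        simp only [hcoeff, Sum.elim_inl, Sum.elim_inr, gen, Prod.smul_mk, smul_zero]
        rw [Finset.sum_const_zero, add_zero]
        have h1 : ∀ t : Fin r, (m j).1 t • (Pi.single t (1:R) : Fin r → R)
            = Pi.single t ((m j).1 t) := by
          intro t
          rw [← Pi.single_smul, smul_eq_mul, mul_one]
        rw [Finset.sum_congr rfl (fun t _ => h1 t), Finset.univ_sum_single]
      · rw [Prod.snd_add, Prod.snd_sum, Prod.snd_sum]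
        simp only [hcoeff, Sum.elim_inl, Sum.elim_inr, gen, Prod.smul_mk, smul_zero]
        rw [Finset.sum_const_zero, zero_add]
        have h2 : ∀ i : Fin s,
            (Ideal.Quotient.mk_surjective ((m j).2 i)).choose •
              (Pi.single i (Ideal.Quotient.mk (Ideal.span {a i}) 1) :
                Π i : Fin s, R ⧸ Ideal.span {a i})
            = Pi.single i ((m j).2 i) := by
          intro i
          rw [← Pi.single_smul, smul_mk_one,
            (Ideal.Quotient.mk_surjective ((m j).2 i)).choose_spec]
        rw [Finset.sum_congr rfl (fun i _ => h2 i), Finset.univ_sum_single]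
    have ht : tprod R m = ∑ F : Fin n → Fin r ⊕ Fin s,
        (∏ j, coeff j (F j)) • tprod R (gen a ∘ F) := by
      conv_lhs => rw [show m = fun j => ∑ c : Fin r ⊕ Fin s, coeff j c • gen a c
        from funext hm]
      rw [MultilinearMap.map_sum]
      refine Finset.sum_congr rfl (fun F _ => ?_)
      rw [MultilinearMap.map_smul_univ]
      rfl
    have hmk : Submodule.Quotient.mk (p := SymRel R (PMod R r s a) n)
        (∑ F : Fin n → Fin r ⊕ Fin s, (∏ j, coeff j (F j)) • tprod R (gen a ∘ F))
        = ∑ F : Fin n → Fin r ⊕ Fin s, (∏ j, coeff j (F j)) • symtensor a F := by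
      rw [← Submodule.mkQ_apply, map_sum]
      refine Finset.sum_congr rfl (fun F _ => ?_)
      rw [map_smul]
      rfl
    rw [ht, hmk]
    exact Submodule.sum_mem _
      (fun F _ => Submodule.smul_mem _ _ (Submodule.subset_span ⟨F, rfl⟩))
  | add p q hp hq =>
    rw [Submodule.Quotient.mk_add]
    exact Submodule.add_mem _ hp hq

end Main3

section Main4
variable {R : Type*} [CommRing R] {r s n : ℕ} (a : Fin s → R)
variable (eF : Fin ((r + n - 1).choose n) ≃ {u : Fin n → Fin r // Monotone u})
variable (eT : ∀ k : Fin n, Fin ((r + (n - (k.1+1)) - 1).choose (n - (k.1+1)))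
  ≃ {u : Fin (n - (k.1+1)) → Fin r // Monotone u})

lemma wF_inj {q q' : Fin ((r + n - 1).choose n)}
    (h : msOf (wF (s := s) eF q) = msOf (wF (s := s) eF q')) : q = q' := by
  have := inl_inj (eF q).2 (eF q').2 h
  exact eF.injective (Subtype.ext this)

lemma cntR_wF (q : Fin ((r + n - 1).choose n)) : cntR (msOf (wF (s := s) eF q)) = 0 := cntR_inl _

lemma cntR_wT (k : Fin n) (v : {v : Fin (k.1 + 1) → Fin s // Monotone v})
    (q : Fin ((r + (n - (k.1+1)) - 1).choose (n - (k.1+1)))) :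
    cntR (msOf (wT eT k v q)) = k.1 + 1 := cntR_merge _ _ _

lemma wT_inj_k {k k' : Fin n} {v : {v : Fin (k.1 + 1) → Fin s // Monotone v}}
    {v' : {v : Fin (k'.1 + 1) → Fin s // Monotone v}}
    {q : Fin ((r + (n - (k.1+1)) - 1).choose (n - (k.1+1)))}
    {q' : Fin ((r + (n - (k'.1+1)) - 1).choose (n - (k'.1+1)))}
    (h : msOf (wT eT k v q) = msOf (wT eT k' v' q')) : k = k' := by
  have h1 := congrArg cntR h
  rw [cntR_wT, cntR_wT] at h1
  exact Fin.ext (by omega)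

lemma wT_inj_vq {k : Fin n} {v v' : {v : Fin (k.1 + 1) → Fin s // Monotone v}}
    {q q' : Fin ((r + (n - (k.1+1)) - 1).choose (n - (k.1+1)))}
    (h : msOf (wT eT k v q) = msOf (wT eT k v' q')) : v = v' ∧ q = q' := by
  obtain ⟨h1, h2⟩ := merge_inj (hkk k) ((eT k) q).2 ((eT k) q').2 v.2 v'.2 h
  exact ⟨Subtype.ext h2, (eT k).injective (Subtype.ext h1)⟩

lemma merge_zero {m : ℕ} (h : m + 0 = n) (u : Fin m → Fin r) (v : Fin 0 → Fin s)
    (hn : n = m) : merge h u v = Sum.inl ∘ (u ∘ Fin.cast hn) := by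
  subst hn
  funext j
  show Fin.append (Sum.inl ∘ u) (Sum.inr ∘ v) (Fin.cast h.symm j) = _
  have hc : Fin.cast h.symm j = Fin.castAdd 0 j := by apply Fin.ext; rfl
  rw [hc, Fin.append_left]
  rfl

lemma psi_phi_symtensor (w : Fin n → Fin r ⊕ Fin s) :
    psi a eF eT (phi a eF eT (symtensor a w)) = symtensor a w := by
  classical
  have hxy : phi a eF eT (symtensor a w) =
      (fun q => if msOf w = msOf (wF eF q) then 1 else 0,
       fun k v q => if msOf w = msOf (wT eT k v q) then (1 : R ⧸ Iv a v) else 0) := by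
    refine Prod.ext (funext fun q => phi_symtensor_fst a eF eT w q)
      (funext fun k => funext fun v => funext fun q => phi_symtensor_snd a eF eT w k v q)
  rw [hxy, psi_apply]
  have hsm : ∀ (q : Fin ((r + n - 1).choose n)),
      (if msOf w = msOf (wF eF q) then (1:R) else 0) • symtensor a (wF eF q)
      = if msOf w = msOf (wF eF q) then symtensor a (wF eF q) else 0 := by
    intro q; split_ifs <;> simp
  have hql : ∀ (k : Fin n) (v : {v : Fin (k.1 + 1) → Fin s // Monotone v})
      (q : Fin ((r + (n - (k.1+1)) - 1).choose (n - (k.1+1)))),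
      qLift a eT k v q (if msOf w = msOf (wT eT k v q) then (1 : R ⧸ Iv a v) else 0)
      = if msOf w = msOf (wT eT k v q) then symtensor a (wT eT k v q) else 0 := by
    intro k v q
    split_ifs
    · have h1 : (1 : R ⧸ Iv a v) = Ideal.Quotient.mk _ (1:R) := rfl
      rw [h1, qLift_mk, one_smul]
    · exact map_zero _
  simp only [hsm, hql]
  obtain ⟨m, k0, h, u, v, hu, hv, π, hmerge⟩ := exists_canonical_nat w
  have hms : msOf (merge h u v) = msOf w := by rw [hmerge, msOf_comp_perm']
  have hsymt : symtensor a (merge h u v) = symtensor a w := by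
    rw [hmerge, symtensor_perm]
  rcases k0 with _ | k'
  · -- free case
    have hmn : n = m := by omega
    have hmcF : Monotone (Fin.cast hmn : Fin n → Fin m) := by
      intro i j hij
      rw [Fin.le_def] at hij ⊢
      exact hij
    set q0 := eF.symm ⟨u ∘ Fin.cast hmn, hu.comp hmcF⟩ with hq0def
    have hwfq0 : wF eF q0 = merge h u v := by
      rw [wF, hq0def, Equiv.apply_symm_apply, merge_zero h u v hmn]
    have hq0 : msOf w = msOf (wF eF q0) := by rw [hwfq0, hms]
    have hfree : (∑ q, if msOf w = msOf (wF eF q) then symtensor a (wF eF q) else 0)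
        = symtensor a w := by
      rw [Finset.sum_eq_single q0]
      · rw [if_pos hq0, hwfq0, hsymt]
      · intro q _ hq
        by_cases hP : msOf w = msOf (wF eF q)
        · exact absurd (wF_inj eF (hq0.symm.trans hP)) (by simpa using hq.symm)
        · rw [if_neg hP]
      · intro hq; exact absurd (Finset.mem_univ q0) hq
    have htor : ∀ (k : Fin n) (vv : {v : Fin (k.1 + 1) → Fin s // Monotone v})
        (q : Fin ((r + (n - (k.1+1)) - 1).choose (n - (k.1+1)))),
        (if msOf w = msOf (wT eT k vv q) then symtensor a (wT eT k vv q) else 0) = 0 := by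
      intro k vv q
      by_cases hP : msOf w = msOf (wT eT k vv q)
      · exfalso
        have h1 := congrArg cntR (hms.trans hP)
        rw [cntR_wT, cntR_merge] at h1
        omega
      · rw [if_neg hP]
    rw [hfree]
    simp only [htor, Finset.sum_const_zero, add_zero]
  · -- torsion case
    have hk'n : k' < n := by omega
    set kk : Fin n := ⟨k', hk'n⟩ with hkkdef
    have hc : n - (k' + 1) = m := by omega
    have hmc : Monotone (Fin.cast hc : Fin (n - (k'+1)) → Fin m) := by
      intro i j hij
      rw [Fin.le_def] at hij ⊢
      exact hij
    set u' : Fin (n - (k'+1)) → Fin r := u ∘ Fin.cast hc with hu'def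
    have hu' : Monotone u' := hu.comp hmc
    set q0 := (eT kk).symm ⟨u', hu'⟩ with hq0def
    set v0 : {v : Fin (kk.1 + 1) → Fin s // Monotone v} := ⟨v, hv⟩ with hv0def
    have hwT : wT eT kk v0 q0 = merge h u v := by
      rw [wT, hq0def, Equiv.apply_symm_apply]
      show merge (hkk kk) u' v = merge h u v
      have hvc : v = v ∘ Fin.cast (rfl : k' + 1 = k' + 1) := by
        funext j; exact congrArg v (Fin.ext rfl)
      rw [hu'def]
      conv_lhs => rw [hvc]
      exact merge_cast h (hkk kk) hc rfl u v
    have hq0 : msOf w = msOf (wT eT kk v0 q0) := by rw [hwT, hms]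
    have hcnt : cntR (msOf w) = k' + 1 := by rw [← hms, cntR_merge]
    have hfree : ∀ q, (if msOf w = msOf (wF eF q) then symtensor a (wF eF q) else 0) = 0 := by
      intro q
      by_cases hP : msOf w = msOf (wF eF q)
      · exfalso
        have h1 := congrArg cntR hP
        rw [cntR_wF] at h1
        omega
      · rw [if_neg hP]
    simp only [hfree, Finset.sum_const_zero, zero_add]
    rw [Finset.sum_eq_single kk]
    · rw [Finset.sum_eq_single v0]
      · rw [Finset.sum_eq_single q0]
        · rw [if_pos hq0, hwT, hsymt]
        · intro q _ hq
          by_cases hP : msOf w = msOf (wT eT kk v0 q)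
          · exact absurd (wT_inj_vq eT (hq0.symm.trans hP)).2 (by simpa using hq.symm)
          · rw [if_neg hP]
        · intro hq; exact absurd (Finset.mem_univ q0) hq
      · intro vv _ hvv
        refine Finset.sum_eq_zero (fun q _ => ?_)
        by_cases hP : msOf w = msOf (wT eT kk vv q)
        · exact absurd (wT_inj_vq eT (hq0.symm.trans hP)).1 (by simpa using hvv.symm)
        · rw [if_neg hP]
      · intro hv0; exact absurd (Finset.mem_univ v0) hv0
    · intro k _ hk
      refine Finset.sum_eq_zero (fun vv _ => Finset.sum_eq_zero (fun q _ => ?_))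
      by_cases hP : msOf w = msOf (wT eT k vv q)
      · exfalso
        have h1 := congrArg cntR hP
        rw [hcnt, cntR_wT] at h1
        exact hk (Fin.ext (by simpa [hkkdef] using h1.symm))
      · rw [if_neg hP]
    · intro hkk2; exact absurd (Finset.mem_univ kk) hkk2

end Main4

section Main5
variable {R : Type*} [CommRing R] {r s n : ℕ} (a : Fin s → R)
variable (eF : Fin ((r + n - 1).choose n) ≃ {u : Fin n → Fin r // Monotone u})
variable (eT : ∀ k : Fin n, Fin ((r + (n - (k.1+1)) - 1).choose (n - (k.1+1)))
  ≃ {u : Fin (n - (k.1+1)) → Fin r // Monotone u})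

lemma phi_psi_single_free (q : Fin ((r + n - 1).choose n)) :
    phi a eF eT (psi a eF eT (Pi.single q 1, 0)) = (Pi.single q 1, 0) := by
  classical
  have h1 : psi a eF eT (Pi.single q 1, 0) = symtensor a (wF eF q) := by
    rw [psi_apply]
    have hz : ∀ (k : Fin n) (v : {v : Fin (k.1 + 1) → Fin s // Monotone v})
        (q' : Fin ((r + (n - (k.1+1)) - 1).choose (n - (k.1+1)))),
        qLift a eT k v q' ((0 : Π (k : Fin n) (v : {v : Fin (k.1 + 1) → Fin s // Monotone v}),
          Fin ((r + (n - (k.1+1)) - 1).choose (n - (k.1+1))) → R ⧸ Iv a v) k v q') = 0 := by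
      intro k v q'
      exact map_zero _
    simp only [hz, Finset.sum_const_zero, add_zero]
    rw [Finset.sum_eq_single q]
    · rw [Pi.single_eq_same, one_smul]
    · intro q' _ hq'
      rw [Pi.single_eq_of_ne hq', zero_smul]
    · intro hq; exact absurd (Finset.mem_univ q) hq
  rw [h1]
  refine Prod.ext ?_ ?_
  · funext q'
    rw [phi_symtensor_fst]
    rcases eq_or_ne q' q with rfl | hne
    · rw [if_pos rfl]
      exact (Pi.single_eq_same (M := fun _ : Fin ((r + n - 1).choose n) => R) q' 1).symm
    · by_cases hP : msOf (wF (s := s) eF q) = msOf (wF (s := s) eF q')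
      · exact absurd (wF_inj eF hP) hne.symm
      · rw [if_neg hP]
        exact (Pi.single_eq_of_ne (M := fun _ : Fin ((r + n - 1).choose n) => R) hne 1).symm
  · funext k v q2
    rw [phi_symtensor_snd]
    by_cases hP : msOf (wF (s := s) eF q) = msOf (wT eT k v q2)
    · exfalso
      have h2 := congrArg cntR hP
      rw [cntR_wF, cntR_wT] at h2
      omega
    · rw [if_neg hP]
      rfl

lemma phi_psi_single_tor (k : Fin n) (v : {v : Fin (k.1 + 1) → Fin s // Monotone v})
    (q : Fin ((r + (n - (k.1+1)) - 1).choose (n - (k.1+1)))) (x : R) :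
    phi a eF eT (psi a eF eT (0, Pi.single k (Pi.single v (Pi.single q
      (Submodule.Quotient.mk x)))))
    = (0, Pi.single k (Pi.single v (Pi.single q (Submodule.Quotient.mk x)))) := by
  classical
  have h1 : psi a eF eT (0, Pi.single k (Pi.single v (Pi.single q
      (Submodule.Quotient.mk x)))) = x • symtensor a (wT eT k v q) := by
    rw [psi_apply]
    simp only [Pi.zero_apply, zero_smul, Finset.sum_const_zero, zero_add]
    rw [Finset.sum_eq_single k]
    · rw [Pi.single_eq_same]
      rw [Finset.sum_eq_single v]
      · rw [Pi.single_eq_same]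
        rw [Finset.sum_eq_single q]
        · rw [Pi.single_eq_same]
          exact qLift_mk a eT k v q x
        · intro q' _ hq'
          rw [Pi.single_eq_of_ne hq', map_zero]
        · intro hq; exact absurd (Finset.mem_univ q) hq
      · intro v' _ hv'
        rw [Pi.single_eq_of_ne hv']
        exact Finset.sum_eq_zero (fun q' _ => map_zero _)
      · intro hv; exact absurd (Finset.mem_univ v) hv
    · intro k' _ hk'
      rw [Pi.single_eq_of_ne hk']
      exact Finset.sum_eq_zero (fun v' _ => Finset.sum_eq_zero (fun q' _ => map_zero _))
    · intro hk; exact absurd (Finset.mem_univ k) hk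
  rw [h1, map_smul]
  refine Prod.ext ?_ ?_
  · funext q'
    show x • (phi a eF eT (symtensor a (wT eT k v q))).1 q' = (0 : Fin _ → R) q'
    rw [phi_symtensor_fst]
    by_cases hP : msOf (wT eT k v q) = msOf (wF (s := s) eF q')
    · exfalso
      have h2 := congrArg cntR hP
      rw [cntR_wF, cntR_wT] at h2
      omega
    · rw [if_neg hP, smul_zero]
      rfl
  · funext k' v' q'
    have hcomp : (x • phi a eF eT (symtensor a (wT eT k v q))).2 k' v' q'
        = x • (phi a eF eT (symtensor a (wT eT k v q))).2 k' v' q' := rfl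
    rw [hcomp, phi_symtensor_snd]
    have hY : ((0 : Fin ((r + n - 1).choose n) → R),
        Pi.single k (Pi.single v (Pi.single q (Submodule.Quotient.mk x)))).2
        = Pi.single (M := fun k : Fin n =>
            Π v : {v : Fin (k.1 + 1) → Fin s // Monotone v},
              Fin ((r + (n - (k.1+1)) - 1).choose (n - (k.1+1))) → R ⧸ Iv a v)
          k (Pi.single v (Pi.single q (Submodule.Quotient.mk x))) := rfl
    rw [hY]
    rcases eq_or_ne k' k with rfl | hk'
    · rw [Pi.single_eq_same]
      rcases eq_or_ne v' v with rfl | hv'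
      · rw [Pi.single_eq_same]
        rcases eq_or_ne q' q with rfl | hq'
        · rw [Pi.single_eq_same, if_pos rfl]
          have : (1 : R ⧸ Iv a v') = Ideal.Quotient.mk _ (1:R) := rfl
          rw [this, smul_mk_one]
          rfl
        · rw [Pi.single_eq_of_ne hq']
          by_cases hP : msOf (wT eT k' v' q) = msOf (wT eT k' v' q')
          · exact absurd (wT_inj_vq eT hP).2 hq'.symm
          · rw [if_neg hP, smul_zero]
      · rw [Pi.single_eq_of_ne hv']
        by_cases hP : msOf (wT eT k' v q) = msOf (wT eT k' v' q')
        · exact absurd (wT_inj_vq eT hP).1 hv'.symm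
        · rw [if_neg hP, smul_zero]
          rfl
    · rw [Pi.single_eq_of_ne hk']
      by_cases hP : msOf (wT eT k v q) = msOf (wT eT k' v' q')
      · exact absurd (wT_inj_k eT hP) hk'.symm
      · rw [if_neg hP, smul_zero]
        rfl

lemma phi_comp_psi : (phi a eF eT) ∘ₗ (psi a eF eT) = LinearMap.id := by
  classical
  ext
  all_goals simp only [LinearMap.comp_apply, LinearMap.inl_apply, LinearMap.inr_apply,
    LinearMap.coe_single, LinearMap.id_coe, id_eq, Submodule.mkQ_apply]
  all_goals first
    | rw [phi_psi_single_free]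
    | rw [phi_psi_single_tor]

lemma psi_comp_phi : (psi a eF eT) ∘ₗ (phi a eF eT) = LinearMap.id := by
  refine LinearMap.ext_on (span_symtensor a (r := r) (n := n)) ?_
  rintro x ⟨w, rfl⟩
  simp only [LinearMap.comp_apply, LinearMap.id_coe, id_eq]
  exact psi_phi_symtensor a eF eT w

/-- the main equivalence for the standard module -/
noncomputable def mainEquiv : SymPow R (PMod R r s a) n ≃ₗ[R] XMod R r s n a :=
  LinearEquiv.ofLinear (phi a eF eT) (psi a eF eT) (phi_comp_psi a eF eT)
    (psi_comp_phi a eF eT)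

end Main5

end SPD

/-- If `M ≅ R^r ⊕ ⊕_{i=1}^s R/Ra_i`, then
`S^n M ≅ R^{C(r+n-1,n)} ⊕ ⊕_{k=1}^n ⊕_{1 ≤ i_1 ≤ … ≤ i_k ≤ s}
(R/⟨a_{i_1},…,a_{i_k}⟩)^{C(r+n-k-1,n-k)}`, the inner sum being over weakly increasing
`k`-tuples (encoded as monotone functions `Fin k → Fin s`).  Here `k : Fin n` encodes the
index `k+1 ∈ {1,…,n}`. -/
theorem symPower_decomposition
    (R : Type) [CommRing R] (r s n : ℕ) (a : Fin s → R)
    (M : Type) [AddCommGroup M] [Module R M]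
    (hM : Nonempty (M ≃ₗ[R] (Fin r → R) × (Π i : Fin s, R ⧸ Ideal.span {a i}))) :
    Nonempty (SymPow R M n ≃ₗ[R]
      (Fin ((r + n - 1).choose n) → R) ×
      Π (k : Fin n) (v : {v : Fin (k.val + 1) → Fin s // Monotone v}),
        Fin ((r + (n - (k.val + 1)) - 1).choose (n - (k.val + 1))) →
          R ⧸ Ideal.span (Set.range fun j => a (v.1 j))) := by
  obtain ⟨e⟩ := hM
  classical
  have h1 : Fintype.card {u : Fin n → Fin r // Monotone u} = (r + n - 1).choose n := by
    rw [← Nat.card_eq_fintype_card, SPD.card_mono]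
  have h2 : ∀ k : Fin n, Fintype.card {u : Fin (n - (k.val + 1)) → Fin r // Monotone u}
      = (r + (n - (k.val + 1)) - 1).choose (n - (k.val + 1)) := fun k => by
    rw [← Nat.card_eq_fintype_card, SPD.card_mono]
  exact ⟨(SPD.sympowCongr e).trans (SPD.mainEquiv a
    (Fintype.equivFinOfCardEq h1).symm (fun k => (Fintype.equivFinOfCardEq (h2 k)).symm))⟩
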